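/- Let ψ(t) = (φ(√t))^p with φ a concave index function and 0 < p < 1, and define φ_app(α) := sup_{τ≥0}[ψ(τ) − τ/α]. Then for all C > 1 and α > 0 it holds φ_app(C·α) ≤ C^{p/(2−p)} · φ_app(α). -/

import Mathlib

lemma concave_scale (φ : ℝ → ℝ) (h0 : φ 0 = 0)
    (hconc : ConcaveOn ℝ (Set.Ici 0) φ)
    {k s : ℝ} (hk : 1 ≤ k) (hs : 0 ≤ s) : φ (k * s) ≤ k * φ s := by
  have hk0 : 0 < k := lt_of_lt_of_le one_pos hk
  have hks : (0:ℝ) ≤ k * s := mul_nonneg hk0.le hs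
  have hmem : (k * s) ∈ Set.Ici (0:ℝ) := Set.mem_Ici.mpr hks
  have h0mem : (0:ℝ) ∈ Set.Ici (0:ℝ) := Set.mem_Ici.mpr le_rfl
  have ha : (0:ℝ) ≤ 1 / k := by positivity
  have hb : (0:ℝ) ≤ 1 - 1 / k := by
    have : 1 / k ≤ 1 := by rw [div_le_one hk0]; exact hk
    linarith
  have hab : 1 / k + (1 - 1 / k) = 1 := by ring
  have hcc := hconc.2 hmem h0mem ha hb hab
  have hleft : (1 / k) • (k * s) + (1 - 1 / k) • (0:ℝ) = s := by
    rw [smul_eq_mul, smul_eq_mul, mul_zero, add_zero, one_div, inv_mul_cancel_left₀ hk0.ne']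
  rw [hleft] at hcc
  have h1 : (1 / k) * φ (k * s) ≤ φ s := by
    simpa [h0, smul_eq_mul] using hcc
  calc φ (k * s) = k * ((1 / k) * φ (k * s)) := by field_simp
    _ ≤ k * φ s := mul_le_mul_of_nonneg_left h1 hk0.le

/-- For ψ(t) = φ(√t)^p with φ a concave index function and 0 < p < 1, and
φ_app(α) = sup_{τ≥0}[ψ(τ) − τ/α], it holds φ_app(C·α) ≤ C^(p/(2−p))·φ_app(α)
for all C > 1, α > 0. -/
theorem phi_app_scaling
    (φ : ℝ → ℝ)
    (hcont : ContinuousOn φ (Set.Ici 0))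
    (hmono : StrictMonoOn φ (Set.Ici 0))
    (h0 : φ 0 = 0)
    (hconc : ConcaveOn ℝ (Set.Ici 0) φ)
    (p : ℝ) (hp0 : 0 < p) (hp1 : p < 1)
    (C α : ℝ) (hC : 1 < C) (hα : 0 < α)
    (hbdd : BddAbove {y : ℝ | ∃ τ ≥ (0:ℝ), y = Real.rpow (φ (Real.sqrt τ)) p - τ / α}) :
    sSup {y : ℝ | ∃ τ ≥ (0:ℝ), y = Real.rpow (φ (Real.sqrt τ)) p - τ / (C * α)}
      ≤ Real.rpow C (p / (2 - p)) *
        sSup {y : ℝ | ∃ τ ≥ (0:ℝ), y = Real.rpow (φ (Real.sqrt τ)) p - τ / α} := by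
  simp only [Real.rpow_eq_pow] at hbdd ⊢
  set S := {y : ℝ | ∃ τ ≥ (0:ℝ), y = (φ (Real.sqrt τ)) ^ p - τ / α} with hS
  have hC0 : (0:ℝ) < C := lt_trans one_pos hC
  have h2p : (0:ℝ) < 2 - p := by linarith
  set k := C ^ ((1:ℝ) / (2 - p)) with hk
  have hk1 : 1 ≤ k := Real.one_le_rpow hC.le (by positivity)
  have hk0 : (0:ℝ) < k := lt_of_lt_of_le one_pos hk1
  set K := C ^ (p / (2 - p)) with hK
  have hK0 : (0:ℝ) < K := Real.rpow_pos_of_pos hC0 _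
  -- k ^ p = K
  have hkp : k ^ p = K := by
    rw [hk, hK, ← Real.rpow_mul hC0.le]
    congr 1
    field_simp
  -- k * k / C = K
  have hkk : k * k = C ^ ((2:ℝ) / (2 - p)) := by
    rw [hk, ← Real.rpow_add hC0]
    congr 1
    ring
  have hkkC : k * k / C = K := by
    rw [hkk, hK]
    rw [show ((2:ℝ) / (2 - p)) = p / (2 - p) + 1 by field_simp; ring]
    rw [Real.rpow_add hC0, Real.rpow_one]
    field_simp
  -- 0 ∈ S, so 0 ≤ sSup S
  have h0S : (0:ℝ) ∈ S := by
    refine ⟨0, le_refl 0, ?_⟩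
    simp [Real.sqrt_zero, h0, Real.zero_rpow hp0.ne']
  have hSup0 : 0 ≤ sSup S := le_csSup hbdd h0S
  -- main bound
  apply Real.sSup_le
  · rintro y ⟨τ, hτ, rfl⟩
    set σ := τ / (k * k) with hσ
    have hσ0 : 0 ≤ σ := div_nonneg hτ (by positivity)
    have hτeq : τ = (k * k) * σ := by
      rw [hσ]; field_simp
    have hsqrt : Real.sqrt τ = k * Real.sqrt σ := by
      rw [hτeq, show k * k * σ = (k * Real.sqrt σ) * (k * Real.sqrt σ) by
          rw [mul_mul_mul_comm, Real.mul_self_sqrt hσ0],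
        Real.sqrt_mul_self (by positivity)]
    have hφσ0 : 0 ≤ φ (Real.sqrt σ) := by
      rw [← h0]
      exact (hmono.monotoneOn) (Set.mem_Ici.mpr le_rfl)
        (Set.mem_Ici.mpr (Real.sqrt_nonneg σ)) (Real.sqrt_nonneg σ)
    -- ψ(τ) ≤ K * ψ(σ)
    have hpsi : (φ (Real.sqrt τ)) ^ p ≤ K * (φ (Real.sqrt σ)) ^ p := by
      rw [hsqrt]
      calc (φ (k * Real.sqrt σ)) ^ p
          ≤ (k * φ (Real.sqrt σ)) ^ p := by
            apply Real.rpow_le_rpow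
            · rw [← h0]
              exact (hmono.monotoneOn) (Set.mem_Ici.mpr le_rfl)
                (Set.mem_Ici.mpr (by positivity)) (by positivity)
            · exact concave_scale φ h0 hconc hk1 (Real.sqrt_nonneg σ)
            · exact hp0.le
        _ = k ^ p * (φ (Real.sqrt σ)) ^ p :=
            Real.mul_rpow hk0.le hφσ0
        _ = K * (φ (Real.sqrt σ)) ^ p := by rw [hkp]
    -- τ/(Cα) = K * (σ/α)
    have hlin : τ / (C * α) = K * (σ / α) := by
      rw [hτeq, ← hkkC]
      field_simp
    have hmemS : (φ (Real.sqrt σ)) ^ p - σ / α ∈ S :=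
      ⟨σ, hσ0, rfl⟩
    calc (φ (Real.sqrt τ)) ^ p - τ / (C * α)
        ≤ K * (φ (Real.sqrt σ)) ^ p - K * (σ / α) := by
          rw [hlin]; linarith
      _ = K * ((φ (Real.sqrt σ)) ^ p - σ / α) := by ring
      _ ≤ K * sSup S := mul_le_mul_of_nonneg_left (le_csSup hbdd hmemS) hK0.le
  · positivity
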